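/- Let a > 0, λ > 0, t0 = (a+1)/a, θ̃ = (a+1)^2/(a^2+3a+1), τ̃ = a(a+1)/(a^2+3a+1), and let y0 : ℝ → ℝ be the θ̃-periodic function with y0(t) = t on [0, 1−θ̃], y0(t) = −a(t − (1−θ̃)t0) on [1−θ̃, 1−τ̃], y0(t) = t − θ̃ on [1−τ̃, θ̃]. Then the function v0(t) = exp(λ·y0(t)) is continuous, strictly positive, periodic with period θ̃ < 1 (i.e., its period is strictly shorter than the delay), and for every t ∈ ℝ not of the form 1−θ̃ + kθ̃ or 1−τ̃ + kθ̃ with k ∈ ℤ, v0 is differentiable at t with v0′(t) = λ·F(v0(t−1))·v0(t). -/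

import Mathlib

/-- The relay nonlinearity of the Hutchinson equation: `F a u = 1` if `0 < u ≤ 1`,
`F a u = -a` if `u > 1` (the value off `(0,∞)` is irrelevant). -/
noncomputable def F (a u : ℝ) : ℝ := if 0 < u ∧ u ≤ 1 then 1 else if 1 < u then -a else 0

/-- with `y0` the `θ̃`-periodic solution, the function
`v0(t) = exp(λ y0(t))` is continuous, strictly positive, periodic with period
`θ̃ < 1` (strictly shorter than the delay), and away from the points `1-θ̃+kθ̃`,
`1-τ̃+kθ̃` (`k ∈ ℤ`) it is differentiable with `v0'(t) = λ F(v0(t-1)) v0(t)`. -/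
theorem stmt_19 (a lam : ℝ) (ha : 0 < a) (hlam : 0 < lam) (t0 θt τt : ℝ)
    (ht0 : t0 = (a + 1) / a)
    (hθt : θt = (a + 1) ^ 2 / (a ^ 2 + 3 * a + 1))
    (hτt : τt = a * (a + 1) / (a ^ 2 + 3 * a + 1))
    (y0 : ℝ → ℝ)
    (hy0per : ∀ t : ℝ, y0 (t + θt) = y0 t)
    (hy0a : ∀ t ∈ Set.Icc (0 : ℝ) (1 - θt), y0 t = t)
    (hy0b : ∀ t ∈ Set.Icc (1 - θt) (1 - τt), y0 t = -a * (t - (1 - θt) * t0))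
    (hy0c : ∀ t ∈ Set.Icc (1 - τt) θt, y0 t = t - θt) :
    Continuous (fun t : ℝ => Real.exp (lam * y0 t)) ∧
    (∀ t : ℝ, 0 < Real.exp (lam * y0 t)) ∧
    (∀ t : ℝ, Real.exp (lam * y0 (t + θt)) = Real.exp (lam * y0 t)) ∧
    θt < 1 ∧
    (∀ t : ℝ, (∀ k : ℤ, t ≠ 1 - θt + (k : ℝ) * θt ∧ t ≠ 1 - τt + (k : ℝ) * θt) →
      HasDerivAt (fun s : ℝ => Real.exp (lam * y0 s))
        (lam * F a (Real.exp (lam * y0 (t - 1))) * Real.exp (lam * y0 t)) t) := by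
  have hDpos : (0:ℝ) < a ^ 2 + 3 * a + 1 := by nlinarith
  have hDne : (a ^ 2 + 3 * a + 1 : ℝ) ≠ 0 := ne_of_gt hDpos
  have hane : a ≠ 0 := ne_of_gt ha
  have hθD : θt * (a ^ 2 + 3 * a + 1) = (a + 1) ^ 2 := by
    rw [hθt]; field_simp
  have hτD : τt * (a ^ 2 + 3 * a + 1) = a * (a + 1) := by
    rw [hτt]; field_simp
  have h1θD : (1 - θt) * (a ^ 2 + 3 * a + 1) = a := by linear_combination -hθD
  have hcD : ((1 - θt) * t0) * (a ^ 2 + 3 * a + 1) = a + 1 := by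
    rw [ht0]
    field_simp
    linear_combination h1θD
  have h1τD : (1 - τt) * (a ^ 2 + 3 * a + 1) = 2 * a + 1 := by linear_combination -hτD
  -- basic inequalities
  have h1θpos : 0 < 1 - θt := by nlinarith [h1θD]
  have hθ1 : θt < 1 := by linarith
  have h1θc : 1 - θt < (1 - θt) * t0 := by nlinarith [hcD, h1θD]
  have hc1τ : (1 - θt) * t0 < 1 - τt := by nlinarith [hcD, h1τD]
  have h1τθ : 1 - τt < θt := by nlinarith [h1τD, hθD]
  have hτpos : 0 < τt := by nlinarith [hτD]
  have hθpos : 0 < θt := by linarith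
  have hθτc : θt - τt = (1 - θt) * t0 := by
    refine mul_right_cancel₀ hDne ?_
    linear_combination hθD - hτD - hcD
  -- integer periodicity
  have hper : Function.Periodic y0 θt := hy0per
  have hshift : ∀ (k : ℤ) (x : ℝ), y0 x = y0 (x - k * θt) := by
    intro k x
    have := (hper.int_mul k) (x - k * θt)
    simpa using this
  -- region A: y0 s = s on [1-τt-θt, 1-θt]
  have hA : ∀ s : ℝ, 1 - τt - θt ≤ s → s ≤ 1 - θt → y0 s = s := by
    intro s h1 h2
    rcases le_or_gt 0 s with h | h
    · exact hy0a s ⟨h, h2⟩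
    · have hc : y0 (s + θt) = s + θt - θt := hy0c (s + θt) ⟨by linarith, by linarith⟩
      have : y0 s = y0 (s + θt) := (hy0per s).symm
      rw [this, hc]; ring
  have hAk : ∀ (k : ℤ) (x : ℝ), 1 - τt - θt ≤ x - k * θt → x - k * θt ≤ 1 - θt →
      y0 x = x - k * θt := by
    intro k x h1 h2
    rw [hshift k x]; exact hA _ h1 h2
  have hBk : ∀ (k : ℤ) (x : ℝ), 1 - θt ≤ x - k * θt → x - k * θt ≤ 1 - τt →
      y0 x = -a * ((x - k * θt) - (1 - θt) * t0) := by
    intro k x h1 h2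
    rw [hshift k x]; exact hy0b _ ⟨h1, h2⟩
  -- sign lemmas
  have hNonpos : ∀ r : ℝ, (1 - θt) * t0 ≤ r → r ≤ θt → y0 r ≤ 0 := by
    intro r h1 h2
    rcases le_or_gt r (1 - τt) with h | h
    · rw [hy0b r ⟨by linarith, h⟩]; nlinarith
    · rw [hy0c r ⟨h.le, h2⟩]; linarith
  have hPos : ∀ r : ℝ, 0 < r → r < (1 - θt) * t0 → 0 < y0 r := by
    intro r h1 h2
    rcases le_or_gt r (1 - θt) with h | h
    · rw [hy0a r ⟨h1.le, h⟩]; exact h1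
    · rw [hy0b r ⟨h.le, by linarith⟩]; nlinarith
  -- representative of t modulo θt in (1-τt-θt, 1-τt]
  have hrep : ∀ t : ℝ, ∃ k : ℤ, 1 - τt - θt < t - k * θt ∧ t - k * θt ≤ 1 - τt := by
    intro t
    refine ⟨⌈(t - (1 - τt)) / θt⌉, ?_, ?_⟩
    · have h2 : (⌈(t - (1 - τt)) / θt⌉ : ℝ) - 1 < (t - (1 - τt)) / θt := by
        have := Int.ceil_lt_add_one ((t - (1 - τt)) / θt)
        linarith
      have := (lt_div_iff₀ hθpos).1 h2
      linarith
    · have h1 : (t - (1 - τt)) / θt ≤ (⌈(t - (1 - τt)) / θt⌉ : ℝ) := Int.le_ceil _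
      have := (div_le_iff₀ hθpos).1 h1
      linarith
  -- the derivative statement (proved first; also used implicitly for continuity structure)
  have hderiv : ∀ t : ℝ, (∀ k : ℤ, t ≠ 1 - θt + (k : ℝ) * θt ∧ t ≠ 1 - τt + (k : ℝ) * θt) →
      HasDerivAt (fun s : ℝ => Real.exp (lam * y0 s))
        (lam * F a (Real.exp (lam * y0 (t - 1))) * Real.exp (lam * y0 t)) t := by
    intro t ht
    obtain ⟨k, hs1, hs2⟩ := hrep t
    have hs2' : t - k * θt < 1 - τt := lt_of_le_of_ne hs2 (fun h => (ht k).2 (by linarith))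
    have hsne : t - k * θt ≠ 1 - θt := fun h => (ht k).1 (by linarith)
    rcases lt_or_gt_of_ne hsne with hlt | hgt
    · -- region A : slope 1, F = 1
      have hF : F a (Real.exp (lam * y0 (t - 1))) = 1 := by
        have hval : y0 (t - 1) = y0 (t - 1 - ((k : ℝ) - 2) * θt) := by
          have := hshift (k - 2) (t - 1)
          push_cast at this
          exact this
        have hr1 : (1 - θt) * t0 ≤ t - 1 - ((k : ℝ) - 2) * θt := by
          rw [← hθτc]; linarith
        have hr2 : t - 1 - ((k : ℝ) - 2) * θt ≤ θt := by linarith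
        have hle : y0 (t - 1) ≤ 0 := hval ▸ hNonpos _ hr1 hr2
        have : Real.exp (lam * y0 (t - 1)) ≤ 1 :=
          Real.exp_le_one_iff.2 (mul_nonpos_of_nonneg_of_nonpos hlam.le hle)
        unfold F
        rw [if_pos ⟨Real.exp_pos _, this⟩]
      have hO : (fun x : ℝ => Real.exp (lam * y0 x)) =ᶠ[nhds t]
          (fun x : ℝ => Real.exp (lam * (x - k * θt))) := by
        have hopen : IsOpen {x : ℝ | 1 - τt - θt < x - k * θt ∧ x - k * θt < 1 - θt} :=
          (isOpen_Ioo (a := 1 - τt - θt) (b := 1 - θt)).preimage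
            (continuous_id.sub continuous_const)
        filter_upwards [hopen.mem_nhds ⟨hs1, hlt⟩] with x hx
        rw [hAk k x hx.1.le hx.2.le]
      have hg : HasDerivAt (fun x : ℝ => Real.exp (lam * (x - k * θt)))
          (Real.exp (lam * (t - k * θt)) * lam) t := by
        have hf : HasDerivAt (fun x : ℝ => lam * (x - k * θt)) lam t := by
          simpa using ((hasDerivAt_id t).sub_const ((k : ℝ) * θt)).const_mul lam
        exact hf.exp
      have hfinal := hg.congr_of_eventuallyEq hO
      have hyt : y0 t = t - k * θt := hAk k t hs1.le hlt.le
      rw [hF, hyt]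
      exact hfinal.congr_deriv (by ring)
    · -- region B : slope -a, F = -a
      have hF : F a (Real.exp (lam * y0 (t - 1))) = -a := by
        have hval : y0 (t - 1) = y0 (t - 1 - ((k : ℝ) - 1) * θt) := by
          have := hshift (k - 1) (t - 1)
          push_cast at this
          exact this
        have hr1 : (0:ℝ) < t - 1 - ((k : ℝ) - 1) * θt := by linarith
        have hr2 : t - 1 - ((k : ℝ) - 1) * θt < (1 - θt) * t0 := by
          rw [← hθτc]; linarith
        have hpos : 0 < y0 (t - 1) := hval ▸ hPos _ hr1 hr2
        have h1 : 1 < Real.exp (lam * y0 (t - 1)) :=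
          Real.one_lt_exp_iff.2 (mul_pos hlam hpos)
        unfold F
        rw [if_neg (fun h => absurd h1 (not_lt.2 h.2)), if_pos h1]
      have hO : (fun x : ℝ => Real.exp (lam * y0 x)) =ᶠ[nhds t]
          (fun x : ℝ => Real.exp (lam * (-a * ((x - k * θt) - (1 - θt) * t0)))) := by
        have hopen : IsOpen {x : ℝ | 1 - θt < x - k * θt ∧ x - k * θt < 1 - τt} :=
          (isOpen_Ioo (a := 1 - θt) (b := 1 - τt)).preimage
            (continuous_id.sub continuous_const)
        filter_upwards [hopen.mem_nhds ⟨hgt, hs2'⟩] with x hx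
        rw [hBk k x hx.1.le hx.2.le]
      have hg : HasDerivAt (fun x : ℝ => Real.exp (lam * (-a * ((x - k * θt) - (1 - θt) * t0))))
          (Real.exp (lam * (-a * ((t - k * θt) - (1 - θt) * t0))) * (lam * -a)) t := by
        have hf : HasDerivAt (fun x : ℝ => lam * (-a * ((x - k * θt) - (1 - θt) * t0)))
            (lam * -a) t := by
          have h0 : HasDerivAt (fun x : ℝ => x - k * θt - (1 - θt) * t0) 1 t := by
            simpa using ((hasDerivAt_id t).sub_const ((k : ℝ) * θt)).sub_const ((1 - θt) * t0)
          have := (h0.const_mul (-a)).const_mul lam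
          simpa using this
        exact hf.exp
      have hfinal := hg.congr_of_eventuallyEq hO
      have hyt : y0 t = -a * ((t - k * θt) - (1 - θt) * t0) := hBk k t hgt.le hs2
      rw [hF, hyt]
      exact hfinal.congr_deriv (by ring)
  -- continuity
  have hcont : Continuous (fun t : ℝ => Real.exp (lam * y0 t)) := by
    rw [continuous_iff_continuousAt]
    intro t
    obtain ⟨k, hs1, hs2⟩ := hrep t
    rcases lt_trichotomy (t - k * θt) (1 - θt) with hlt | heq | hgt
    · -- interior of region A
      have hO : (fun x : ℝ => Real.exp (lam * (x - k * θt))) =ᶠ[nhds t]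
          (fun x : ℝ => Real.exp (lam * y0 x)) := by
        have hopen : IsOpen {x : ℝ | 1 - τt - θt < x - k * θt ∧ x - k * θt < 1 - θt} :=
          (isOpen_Ioo (a := 1 - τt - θt) (b := 1 - θt)).preimage
            (continuous_id.sub continuous_const)
        filter_upwards [hopen.mem_nhds ⟨hs1, hlt⟩] with x hx
        rw [hAk k x hx.1.le hx.2.le]
      exact (Continuous.continuousAt (by fun_prop)).congr_of_eventuallyEq hO.symm
    · -- junction at 1 - θt : glue A (left) and B (right)
      have hIic : ContinuousWithinAt (fun x : ℝ => Real.exp (lam * y0 x)) (Set.Iic t) t := by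
        refine ContinuousWithinAt.congr_of_eventuallyEq
          (Continuous.continuousWithinAt (f := fun x : ℝ => Real.exp (lam * (x - k * θt)))
            (by fun_prop)) ?_ ?_
        · have h1 : ∀ᶠ x in nhds t, 1 - τt - θt < x - k * θt := by
            have : ∀ᶠ x in nhds t, t - min τt (θt - τt) < x := eventually_gt_nhds (by simp only [sub_lt_self_iff, lt_min_iff]; exact ⟨hτpos, by linarith⟩)
            filter_upwards [this] with x hx
            linarith [min_le_left τt (θt - τt), min_le_right τt (θt - τt)]
          filter_upwards [h1.filter_mono nhdsWithin_le_nhds, eventually_mem_nhdsWithin]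
            with x hx1 hx2
          rw [hAk k x hx1.le (by simp only [Set.mem_Iic] at hx2; linarith)]
        · rw [hAk k t hs1.le heq.le]
      have hIci : ContinuousWithinAt (fun x : ℝ => Real.exp (lam * y0 x)) (Set.Ici t) t := by
        refine ContinuousWithinAt.congr_of_eventuallyEq
          (Continuous.continuousWithinAt
            (f := fun x : ℝ => Real.exp (lam * (-a * ((x - k * θt) - (1 - θt) * t0))))
            (by fun_prop)) ?_ ?_
        · have h1 : ∀ᶠ x in nhds t, x - k * θt < 1 - τt := by
            have : ∀ᶠ x in nhds t, x < t + (θt - τt) := eventually_lt_nhds (by linarith)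
            filter_upwards [this] with x hx
            linarith
          filter_upwards [h1.filter_mono nhdsWithin_le_nhds, eventually_mem_nhdsWithin]
            with x hx1 hx2
          rw [hBk k x (by simp only [Set.mem_Ici] at hx2; linarith) hx1.le]
        · rw [hBk k t heq.ge (by linarith)]
      have hu := hIic.union hIci
      rw [Set.Iic_union_Ici] at hu
      exact (continuousWithinAt_univ _ t).1 hu
    · rcases lt_or_eq_of_le hs2 with hlt2 | heq2
      · -- interior of region B
        have hO : (fun x : ℝ => Real.exp (lam * (-a * ((x - k * θt) - (1 - θt) * t0))))
            =ᶠ[nhds t] (fun x : ℝ => Real.exp (lam * y0 x)) := by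
          have hopen : IsOpen {x : ℝ | 1 - θt < x - k * θt ∧ x - k * θt < 1 - τt} :=
            (isOpen_Ioo (a := 1 - θt) (b := 1 - τt)).preimage
              (continuous_id.sub continuous_const)
          filter_upwards [hopen.mem_nhds ⟨hgt, hlt2⟩] with x hx
          rw [hBk k x hx.1.le hx.2.le]
        exact (Continuous.continuousAt (by fun_prop)).congr_of_eventuallyEq hO.symm
      · -- junction at 1 - τt : glue B (left) and A with k+1 (right)
        have hIic : ContinuousWithinAt (fun x : ℝ => Real.exp (lam * y0 x)) (Set.Iic t) t := by
          refine ContinuousWithinAt.congr_of_eventuallyEq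
            (Continuous.continuousWithinAt
              (f := fun x : ℝ => Real.exp (lam * (-a * ((x - k * θt) - (1 - θt) * t0))))
              (by fun_prop)) ?_ ?_
          · have h1 : ∀ᶠ x in nhds t, 1 - θt < x - k * θt := by
              have : ∀ᶠ x in nhds t, t - min τt (θt - τt) < x := eventually_gt_nhds (by simp only [sub_lt_self_iff, lt_min_iff]; exact ⟨hτpos, by linarith⟩)
              filter_upwards [this] with x hx
              linarith [min_le_left τt (θt - τt), min_le_right τt (θt - τt)]
            filter_upwards [h1.filter_mono nhdsWithin_le_nhds, eventually_mem_nhdsWithin]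
              with x hx1 hx2
            rw [hBk k x hx1.le (by simp only [Set.mem_Iic] at hx2; linarith)]
          · rw [hBk k t (by linarith) hs2]
        have hIci : ContinuousWithinAt (fun x : ℝ => Real.exp (lam * y0 x)) (Set.Ici t) t := by
          refine ContinuousWithinAt.congr_of_eventuallyEq
            (Continuous.continuousWithinAt
              (f := fun x : ℝ => Real.exp (lam * (x - ((k : ℝ) + 1) * θt)))
              (by fun_prop)) ?_ ?_
          · have h1 : ∀ᶠ x in nhds t, x - ((k : ℝ) + 1) * θt < 1 - θt := by
              have : ∀ᶠ x in nhds t, x < t + τt := eventually_lt_nhds (by linarith)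
              filter_upwards [this] with x hx
              linarith
            filter_upwards [h1.filter_mono nhdsWithin_le_nhds, eventually_mem_nhdsWithin]
              with x hx1 hx2
            have hAk' := hAk (k + 1) x
            push_cast at hAk'
            rw [hAk' (by simp only [Set.mem_Ici] at hx2; linarith) hx1.le]
          · have hAk' := hAk (k + 1) t
            push_cast at hAk'
            rw [hAk' (by linarith) (by linarith)]
        have hu := hIic.union hIci
        rw [Set.Iic_union_Ici] at hu
        exact (continuousWithinAt_univ _ t).1 hu
  exact ⟨hcont, fun t => Real.exp_pos _, fun t => by rw [hy0per t], hθ1, hderiv⟩
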